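/- Let B₀ > 0, R > 0, ω ≥ 0 and let g : (0,∞) → ℝ be given by g(r) = B₀ for r ≤ R and g(r) = 0 for r > R. Define ψ_k(r) = √(B₀/Γ(k+1))·(B₀/2)^{k/2}·r^k·exp(−B₀r²/4) and λ_k = 2kω·∫₀^∞ ψ_k(r)²·(∫_r^∞ g(s)·s ds)·r^{−1} dr. Then ω·∫₀^∞ g(r)·r dr = ω·B₀R²/2, and for every integer k ≥ 1: λ_k ≤ (ω·B₀/Γ(k+1))·(B₀R²/2)^{k+1}. -/

import Mathlib

open Real MeasureTheory

/-- Estimates from the proof of Theorem 7.5 (thm-hole) for a magnetic perturbation supported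
in a disc of radius `R` (a magnetic 'hole' of depth `B₀`): the flux equals `ωB₀R²/2`, and
`λ_k ≤ (ωB₀/Γ(k+1))(B₀R²/2)^{k+1}` for every `k ≥ 1`. -/
theorem compact_support_estimates
    (B₀ R ω : ℝ) (hB₀ : 0 < B₀) (hR : 0 < R) (hω : 0 ≤ ω)
    (g : ℝ → ℝ)
    (hg : ∀ r : ℝ, 0 < r → g r = if r ≤ R then B₀ else 0)
    (ψ : ℕ → ℝ → ℝ)
    (hψ : ∀ (k : ℕ) (r : ℝ), ψ k r = Real.sqrt (B₀ / Real.Gamma ((k : ℝ) + 1))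
        * (B₀ / 2) ^ ((k : ℝ) / 2) * r ^ k * Real.exp (-B₀ * r ^ 2 / 4))
    (lam : ℕ → ℝ)
    (hlam : ∀ k : ℕ, lam k = 2 * k * ω
        * ∫ r in Set.Ioi (0 : ℝ), ψ k r ^ 2 * (∫ s in Set.Ioi r, g s * s) * r⁻¹) :
    ω * (∫ r in Set.Ioi (0 : ℝ), g r * r) = ω * B₀ * R ^ 2 / 2
      ∧ ∀ k : ℕ, 1 ≤ k →
        lam k ≤ ω * B₀ / Real.Gamma ((k : ℝ) + 1) * (B₀ * R ^ 2 / 2) ^ (k + 1) := by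
  -- generic computation of ∫ s in Ioi r, g s * s for r ≥ 0
  have key : ∀ r : ℝ, 0 ≤ r → (∫ s in Set.Ioi r, g s * s)
      = if r < R then B₀ * (R ^ 2 - r ^ 2) / 2 else 0 := by
    intro r hr
    have hcong : Set.EqOn (fun s => g s * s)
        (fun s => (Set.Iic R).indicator (fun s => B₀ * s) s) (Set.Ioi r) := by
      intro s hs
      have hs' : 0 < s := lt_of_le_of_lt hr hs
      simp only [hg s hs', Set.indicator, Set.mem_Iic]
      by_cases h : s ≤ R <;> simp [h]
    rw [setIntegral_congr_fun measurableSet_Ioi hcong,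
      setIntegral_indicator measurableSet_Iic, Set.Ioi_inter_Iic]
    by_cases h : r < R
    · rw [← intervalIntegral.integral_of_le h.le, if_pos h,
        intervalIntegral.integral_const_mul, integral_id]
      ring
    · rw [Set.Ioc_eq_empty h, if_neg h]
      simp
  have hΓpos : ∀ k : ℕ, 0 < Real.Gamma ((k : ℝ) + 1) := by
    intro k
    exact Real.Gamma_pos_of_pos (by positivity)
  constructor
  · -- flux computation
    have hcong : Set.EqOn (fun r => g r * r)
        (fun r => (Set.Iic R).indicator (fun r => B₀ * r) r) (Set.Ioi (0 : ℝ)) := by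
      intro r hr
      simp only [hg r hr, Set.indicator, Set.mem_Iic]
      by_cases h : r ≤ R <;> simp [h]
    rw [setIntegral_congr_fun measurableSet_Ioi hcong,
      setIntegral_indicator measurableSet_Iic, Set.Ioi_inter_Iic,
      ← intervalIntegral.integral_of_le hR.le,
      intervalIntegral.integral_const_mul, integral_id]
    ring
  · intro k hk
    obtain ⟨m, rfl⟩ : ∃ m, k = m + 1 := ⟨k - 1, (Nat.succ_pred_eq_of_pos hk).symm⟩
    set k := m + 1 with hkdef
    set Γk := Real.Gamma ((k : ℝ) + 1) with hΓk
    have hΓ : 0 < Γk := hΓpos k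
    set C : ℝ := B₀ / Γk * (B₀ / 2) ^ k * (B₀ / 2) with hC
    have hCpos : 0 < C := by positivity
    set f : ℝ → ℝ := fun r => C * (r ^ (2 * m + 1) * Real.exp (-B₀ * r ^ 2 / 2)
      * (R ^ 2 - r ^ 2)) with hf
    -- rewrite the integrand on Ioi 0 as an indicator
    have hcong : Set.EqOn (fun r => ψ k r ^ 2 * (∫ s in Set.Ioi r, g s * s) * r⁻¹)
        (fun r => (Set.Ioo (0 : ℝ) R).indicator f r) (Set.Ioi (0 : ℝ)) := by
      intro r hr
      have hr0 : (0 : ℝ) < r := hr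
      show ψ k r ^ 2 * (∫ s in Set.Ioi r, g s * s) * r⁻¹ = (Set.Ioo (0 : ℝ) R).indicator f r
      have hpsi : ψ k r ^ 2 = B₀ / Γk * (B₀ / 2) ^ k * r ^ (2 * k)
          * Real.exp (-B₀ * r ^ 2 / 2) := by
        rw [hψ]
        have h1 : Real.sqrt (B₀ / Γk) ^ 2 = B₀ / Γk := Real.sq_sqrt (by positivity)
        have h2 : ((B₀ / 2) ^ ((k : ℝ) / 2)) ^ 2 = (B₀ / 2) ^ k := by
          rw [← Real.rpow_natCast ((B₀ / 2) ^ ((k : ℝ) / 2)) 2,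
            ← Real.rpow_mul (by positivity)]
          norm_num
        have h3 : Real.exp (-B₀ * r ^ 2 / 4) ^ 2 = Real.exp (-B₀ * r ^ 2 / 2) := by
          rw [← Real.exp_nat_mul]
          congr 1
          push_cast; ring
        have h4 : (r ^ k) ^ 2 = r ^ (2 * k) := by rw [← pow_mul]; ring_nf
        calc (Real.sqrt (B₀ / Γk) * (B₀ / 2) ^ ((k : ℝ) / 2) * r ^ k
            * Real.exp (-B₀ * r ^ 2 / 4)) ^ 2
            = Real.sqrt (B₀ / Γk) ^ 2 * ((B₀ / 2) ^ ((k : ℝ) / 2)) ^ 2 * (r ^ k) ^ 2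
              * Real.exp (-B₀ * r ^ 2 / 4) ^ 2 := by ring
          _ = _ := by rw [h1, h2, h3, h4]
      rw [hpsi, key r hr0.le]
      by_cases h : r < R
      · rw [Set.indicator_of_mem (Set.mem_Ioo.mpr ⟨hr0, h⟩), if_pos h, hf, hC]
        have hrpow : r ^ (2 * k) * r⁻¹ = r ^ (2 * m + 1) := by
          have : r ^ (2 * k) = r ^ (2 * m + 1) * r := by rw [← pow_succ, hkdef]; ring_nf
          rw [this]
          field_simp
        calc B₀ / Γk * (B₀ / 2) ^ k * r ^ (2 * k) * Real.exp (-B₀ * r ^ 2 / 2)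
            * (B₀ * (R ^ 2 - r ^ 2) / 2) * r⁻¹
            = B₀ / Γk * (B₀ / 2) ^ k * (B₀ / 2) * (r ^ (2 * k) * r⁻¹)
              * Real.exp (-B₀ * r ^ 2 / 2) * (R ^ 2 - r ^ 2) := by ring
          _ = _ := by rw [hrpow]; ring
      · rw [Set.indicator_of_notMem (fun hm => h hm.2), if_neg h]
        ring
    have hint : (∫ r in Set.Ioi (0 : ℝ), ψ k r ^ 2 * (∫ s in Set.Ioi r, g s * s) * r⁻¹)
        = ∫ r in Set.Ioo (0 : ℝ) R, f r := by
      rw [setIntegral_congr_fun measurableSet_Ioi hcong,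
        setIntegral_indicator measurableSet_Ioo]
      congr 1
      rw [Set.inter_eq_right.2 (fun x hx => hx.1)]
    -- bound the integral
    have hfcont : Continuous f := by
      apply Continuous.mul continuous_const
      apply Continuous.mul
      · exact (continuous_pow _).mul (Real.continuous_exp.comp
          ((continuous_const.mul (continuous_pow 2)).div_const 2))
      · exact continuous_const.sub (continuous_pow 2)
    have hgcont : Continuous (fun r : ℝ => C * R ^ 2 * r ^ (2 * m + 1)) :=
      continuous_const.mul (continuous_pow _)
    have hfint : IntegrableOn f (Set.Ioo 0 R) := by
      exact (hfcont.integrableOn_Ioc (a := (0:ℝ)) (b := R)).mono_set Set.Ioo_subset_Ioc_self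
    have hgint : IntegrableOn (fun r : ℝ => C * R ^ 2 * r ^ (2 * m + 1)) (Set.Ioo 0 R) := by
      exact (hgcont.integrableOn_Ioc (a := (0:ℝ)) (b := R)).mono_set Set.Ioo_subset_Ioc_self
    have hmono : (∫ r in Set.Ioo (0 : ℝ) R, f r)
        ≤ ∫ r in Set.Ioo (0 : ℝ) R, C * R ^ 2 * r ^ (2 * m + 1) := by
      apply setIntegral_mono_on hfint hgint measurableSet_Ioo
      intro r hr
      have hr0 : 0 < r := hr.1
      have hE : Real.exp (-B₀ * r ^ 2 / 2) ≤ 1 := by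
        rw [Real.exp_le_one_iff]
        nlinarith
      have hE0 : 0 ≤ Real.exp (-B₀ * r ^ 2 / 2) := (Real.exp_pos _).le
      have hpow : (0 : ℝ) ≤ r ^ (2 * m + 1) := by positivity
      have hD : R ^ 2 - r ^ 2 ≤ R ^ 2 := by nlinarith
      have hD0 : 0 ≤ R ^ 2 - r ^ 2 := by nlinarith [hr.2, hr.1]
      rw [hf]
      have : r ^ (2 * m + 1) * Real.exp (-B₀ * r ^ 2 / 2) * (R ^ 2 - r ^ 2)
          ≤ r ^ (2 * m + 1) * R ^ 2 := by
        calc r ^ (2 * m + 1) * Real.exp (-B₀ * r ^ 2 / 2) * (R ^ 2 - r ^ 2)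
            ≤ r ^ (2 * m + 1) * 1 * (R ^ 2 - r ^ 2) := by
              apply mul_le_mul_of_nonneg_right _ hD0
              exact mul_le_mul_of_nonneg_left hE hpow
          _ ≤ r ^ (2 * m + 1) * R ^ 2 := by
              rw [mul_one]
              exact mul_le_mul_of_nonneg_left hD hpow
      nlinarith [hCpos.le, this]
    have hval : (∫ r in Set.Ioo (0 : ℝ) R, C * R ^ 2 * r ^ (2 * m + 1))
        = C * R ^ 2 * (R ^ (2 * m + 2) / (2 * m + 2)) := by
      rw [← MeasureTheory.integral_Ioc_eq_integral_Ioo,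
        ← intervalIntegral.integral_of_le hR.le,
        intervalIntegral.integral_const_mul, integral_pow]
      push_cast
      ring_nf
    rw [hlam k, hint]
    have h2k : (0 : ℝ) ≤ 2 * (k : ℝ) * ω := by positivity
    calc 2 * (k : ℝ) * ω * ∫ r in Set.Ioo (0 : ℝ) R, f r
        ≤ 2 * (k : ℝ) * ω * (C * R ^ 2 * (R ^ (2 * m + 2) / (2 * m + 2))) := by
          rw [← hval]; exact mul_le_mul_of_nonneg_left hmono h2k
      _ = ω * B₀ / Γk * (B₀ * R ^ 2 / 2) ^ (k + 1) := by
          have hm2 : (2 * (m : ℝ) + 2) ≠ 0 := by positivity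
          have hkm : (k : ℝ) = (m : ℝ) + 1 := by push_cast [hkdef]; ring
          rw [hC, hkm]
          field_simp
          ring
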